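/- Let S be a commutative monoid in which every element is an idempotent (s·s = s for all s ∈ S), and let K be a field. Then every module over the monoid algebra K[S] is flat. -/

import Mathlib

open Finset

section Aux

variable {K S : Type*} [Field K] [CommMonoid S]

private lemma idem_prod_mem {S : Type*} [CommMonoid S] (hS : ∀ s : S, s * s = s)
    (u : Finset S) {a : S} (ha : a ∈ u) : (∏ x ∈ u, x) * a = ∏ x ∈ u, x := by
  classical
  have h := Finset.mul_prod_erase u (fun x => x) ha
  beta_reduce at h
  rw [← h, mul_right_comm, hS a]

private lemma idem_prod_union {S : Type*} [CommMonoid S] [DecidableEq S]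
    (hS : ∀ s : S, s * s = s) (u v : Finset S) :
    (∏ x ∈ u ∪ v, x) = (∏ x ∈ u, x) * ∏ x ∈ v, x := by
  induction v using Finset.induction_on with
  | empty => simp
  | @insert a v ha ih =>
    by_cases hau : a ∈ u
    · have h1 : u ∪ insert a v = u ∪ v := by
        rw [Finset.union_insert, Finset.insert_eq_self.2 (Finset.mem_union_left _ hau)]
      have h2 := Finset.prod_insert (f := fun x => x) ha
      beta_reduce at h2
      rw [h1, ih, h2, ← mul_assoc, idem_prod_mem hS u hau]
    · have h2 := Finset.prod_insert (f := fun x => x) ha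
      have h3 := Finset.prod_insert (f := fun x => x) (s := u ∪ v)
        (show a ∉ u ∪ v by simp [ha, hau])
      beta_reduce at h2 h3
      rw [Finset.union_insert, h3, ih, h2, mul_left_comm]

/-- The character of the monoid `S` attached to an element `s`. -/
private noncomputable def phi (hS : ∀ s : S, s * s = s) (s : S) : S →* K where
  toFun u := by classical exact if s * u = s then 1 else 0
  map_one' := by simp
  map_mul' u v := by
    classical
    by_cases h : s * (u * v) = s
    · have hv : s * v = s := by
        calc s * v = s * (u * v) * v := by rw [h]
          _ = s * (u * (v * v)) := by rw [mul_assoc, mul_assoc]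
          _ = s * (u * v) := by rw [hS v]
          _ = s := h
      have hu : s * u = s := by
        calc s * u = s * (u * v) * u := by rw [h]
          _ = s * (v * (u * u)) := by rw [mul_assoc, mul_comm u v, mul_assoc]
          _ = s * (v * u) := by rw [hS u]
          _ = s := by rw [mul_comm v u]; exact h
      simp [h, hu, hv]
    · have hnot : ¬(s * u = s ∧ s * v = s) := fun ⟨h1, h2⟩ =>
        h (by rw [← mul_assoc, h1, h2])
      by_cases h1 : s * u = s
      · have h2 : ¬ s * v = s := fun h2 => hnot ⟨h1, h2⟩
        simp [h, h1, h2]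
      · simp [h, h1]

private lemma phi_apply (hS : ∀ s : S, s * s = s) (s u : S) [Decidable (s * u = s)] :
    (phi (K := K) hS s) u = if s * u = s then 1 else 0 := by
  simp [phi]

end Aux

section VNR

variable {K S : Type*} [Field K] [CommMonoid S]

/-- The character of `MonoidAlgebra K S` attached to `s`. -/
private noncomputable def chi (hS : ∀ s : S, s * s = s) (s : S) :
    MonoidAlgebra K S →ₐ[K] K :=
  MonoidAlgebra.lift K K S (phi hS s)

private lemma chi_single (hS : ∀ s : S, s * s = s) (s t : S) (c : K) :
    chi hS s (MonoidAlgebra.single t c) = c * (phi (K := K) hS s) t := by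
  rw [chi, MonoidAlgebra.lift_single, smul_eq_mul]

/-- Every element of the monoid algebra of an idempotent commutative monoid is
von Neumann regular. -/
private lemma vnr (hS : ∀ s : S, s * s = s) (a : MonoidAlgebra K S) :
    ∃ x, a * x * a = a := by
  classical
  letI : PartialOrder S :=
    { le := fun s t => s * t = s
      le_refl := hS
      le_trans := fun s t u hst htu => by
        show s * u = s
        calc s * u = s * t * u := by rw [hst]
          _ = s * (t * u) := mul_assoc _ _ _
          _ = s * t := by rw [htu]
          _ = s := hst
      le_antisymm := fun s t h1 h2 => by
        show s = t
        calc s = s * t := h1.symm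
          _ = t * s := mul_comm _ _
          _ = t := h2 }
  -- the finite monoid generated by the support of `a`
  set T : Finset S := a.coeff.support.powerset.image (fun u => ∏ x ∈ u, x) with hT
  have hsupp : a.coeff.support ⊆ T := by
    intro t ht
    refine Finset.mem_image.2 ⟨{t}, ?_, by simp⟩
    simpa using ht
  have hmulT : ∀ s ∈ T, ∀ t ∈ T, s * t ∈ T := by
    intro s hs t ht
    obtain ⟨u, hu, rfl⟩ := Finset.mem_image.1 hs
    obtain ⟨v, hv, rfl⟩ := Finset.mem_image.1 ht
    refine Finset.mem_image.2 ⟨u ∪ v, ?_, (idem_prod_union hS u v)⟩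
    rw [Finset.mem_powerset] at hu hv ⊢
    exact Finset.union_subset hu hv
  -- the key injectivity statement
  have key : ∀ c : S → K, (∀ s ∈ T, ∑ t ∈ T, c t * (phi (K := K) hS s) t = 0) →
      ∀ t ∈ T, c t = 0 := by
    intro c hc
    by_contra hne
    push_neg at hne
    obtain ⟨t₀, ht₀, hct₀⟩ := hne
    have hu : (T.filter (fun t => c t ≠ 0)).Nonempty :=
      ⟨t₀, Finset.mem_filter.2 ⟨ht₀, hct₀⟩⟩
    obtain ⟨m, hm, hmax⟩ : ∃ m ∈ T.filter (fun t => c t ≠ 0),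
        ∀ t ∈ T.filter (fun t => c t ≠ 0), ¬ m < t := by
      obtain ⟨m, hm⟩ := Finset.exists_maximal hu
      exact ⟨m, hm.1, fun t ht hlt => lt_irrefl m (lt_of_lt_of_le hlt (hm.2 ht hlt.le))⟩
    obtain ⟨hmT, hcm⟩ := Finset.mem_filter.1 hm
    have hsum := hc m hmT
    rw [← Finset.sum_subset (Finset.filter_subset (fun t => c t ≠ 0) T)
      (by intro t ht ht'
          simp only [Finset.mem_filter, not_and, not_not] at ht'
          rw [ht' ht, zero_mul])] at hsum
    rw [Finset.sum_eq_single m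
      (by intro t ht htm
          have h0 : ¬ ((m : S) * t = m) := by
            intro hle
            exact hmax t ht (lt_of_le_of_ne (show m ≤ t from hle) (fun h => htm h.symm))
          rw [phi_apply hS m t, if_neg h0, mul_zero])
      (fun h => absurd hm h)] at hsum
    rw [phi_apply hS m m, if_pos (hS m), mul_one] at hsum
    exact hcm hsum
  -- the linear map given by the characters, on functions supported on `T`
  let Ψ : ((↥T → K) →ₗ[K] (↥T → K)) :=
    { toFun := fun c s => ∑ t : ↥T, c t * (phi (K := K) hS ↑s) ↑t
      map_add' := fun c d => by
        funext s
        simp [add_mul, Finset.sum_add_distrib]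
      map_smul' := fun r c => by
        funext s
        simp [Finset.mul_sum, mul_assoc] }
  have hinj : Function.Injective Ψ := by
    rw [injective_iff_map_eq_zero]
    intro c hc
    set c' : S → K := fun t => if h : t ∈ T then c ⟨t, h⟩ else 0 with hc'
    have hbt : ∀ t : ↥T, c' ↑t = c t := fun t => dif_pos t.2
    have h0 : ∀ t ∈ T, c' t = 0 := by
      refine key c' (fun s hs => ?_)
      have h1 : ∑ t ∈ T, c' t * (phi (K := K) hS s) t
          = ∑ t : ↥T, c t * (phi (K := K) hS s) ↑t := by
        rw [← Finset.sum_coe_sort T (fun t => c' t * (phi (K := K) hS s) t)]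
        refine Finset.sum_congr rfl (fun t _ => ?_)
        rw [hbt t]
      rw [h1]
      have := congrFun hc ⟨s, hs⟩
      simpa [Ψ] using this
    funext t
    exact hbt t ▸ h0 ↑t t.2
  have hsurj : Function.Surjective Ψ := LinearMap.injective_iff_surjective.mp hinj
  -- construct the quasi-inverse
  obtain ⟨c, hc⟩ := hsurj (fun s => if chi hS (↑s) a = 0 then 0 else (chi hS (↑s) a)⁻¹)
  set x : MonoidAlgebra K S := ∑ t : ↥T, MonoidAlgebra.single (↑t : S) (c t) with hx
  have hchix : ∀ s : ↥T, chi hS (↑s) x = ∑ t : ↥T, c t * (phi (K := K) hS ↑s) ↑t := by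
    intro s
    rw [hx, map_sum]
    exact Finset.sum_congr rfl (fun t _ => chi_single hS _ _ _)
  set d : MonoidAlgebra K S := a * x * a - a with hd
  have hchid : ∀ s ∈ T, chi hS s d = 0 := by
    intro s hs
    have hv := congrFun hc ⟨s, hs⟩
    rw [hd, map_sub, map_mul, map_mul, hchix ⟨s, hs⟩ , ← hchix ⟨s, hs⟩]
    have hxv : chi hS s x = if chi hS s a = 0 then 0 else (chi hS s a)⁻¹ := by
      rw [hchix ⟨s, hs⟩]
      exact hv
    rw [hxv]
    by_cases h : chi hS s a = 0
    · simp [h]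
    · rw [if_neg h]
      field_simp
      ring
  -- support of `d` is contained in `T`
  have hsx : x.coeff.support ⊆ T := by
    rw [hx, MonoidAlgebra.coeff_sum]
    refine (Finsupp.support_finset_sum).trans ?_
    intro t ht
    simp only [Finset.mem_biUnion] at ht
    obtain ⟨u, _, hu⟩ := ht
    have := Finsupp.support_single_subset hu
    simp only [Finset.mem_singleton] at this
    rw [this]
    exact u.2
  have hsd : d.coeff.support ⊆ T := by
    rw [hd, MonoidAlgebra.coeff_sub]
    refine (Finsupp.support_sub).trans ?_
    refine Finset.union_subset ?_ hsupp
    refine (MonoidAlgebra.support_coeff_mul_subset _ _).trans ?_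
    intro t ht
    rw [Finset.mem_mul] at ht
    obtain ⟨y, hy, z, hz, rfl⟩ := ht
    have hy' := (MonoidAlgebra.support_coeff_mul_subset a x) hy
    rw [Finset.mem_mul] at hy'
    obtain ⟨y1, hy1, y2, hy2, rfl⟩ := hy'
    exact hmulT _ (hmulT _ (hsupp hy1) _ (hsx hy2)) _ (hsupp hz)
  -- conclude `d = 0`
  have hd0 : ∀ t ∈ T, d.coeff t = 0 := by
    refine key (fun t => d.coeff t) (fun s hs => ?_)
    have h1 : ∑ t ∈ T, d.coeff t * (phi (K := K) hS s) t = chi hS s d := by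
      rw [← Finset.sum_subset hsd
        (by intro t ht ht'
            rw [Finsupp.notMem_support_iff.1 ht', zero_mul])]
      conv_rhs => rw [← MonoidAlgebra.sum_coeff_single d]
      rw [Finsupp.sum, map_sum]
      exact Finset.sum_congr rfl (fun t _ => (chi_single hS _ _ _).symm)
    rw [h1]
    exact hchid s hs
  refine ⟨x, ?_⟩
  have : d = 0 := by
    ext t
    by_cases ht : t ∈ T
    · exact hd0 t ht
    · exact Finsupp.notMem_support_iff.1 (fun h => ht (hsd h))
  rw [hd, sub_eq_zero] at this
  exact this

end VNR

section Flat

private lemma fg_ideal_idem {R : Type*} [CommRing R] (hv : ∀ a : R, ∃ x, a * x * a = a)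
    (I : Ideal R) (hI : I.FG) : ∃ e : R, e * e = e ∧ I = Ideal.span {e} := by
  refine Submodule.fg_induction (motive := fun J _ => ∃ e : R, e * e = e ∧ J = Ideal.span {e})
    ?_ ?_ I hI
  · intro y
    obtain ⟨x, hx⟩ := hv y
    refine ⟨y * x, by linear_combination x * hx, ?_⟩
    apply le_antisymm
    · show Ideal.span {y} ≤ Ideal.span {y * x}
      rw [Ideal.span_singleton_le_span_singleton]
      exact ⟨y, by linear_combination -hx⟩
    · show Ideal.span {y * x} ≤ Ideal.span {y}
      rw [Ideal.span_singleton_le_span_singleton]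
      exact ⟨x, rfl⟩
  · rintro I J _ _ ⟨e, he, rfl⟩ ⟨f, hf, rfl⟩
    refine ⟨e + f - e * f, by linear_combination (1 - f) * he + (1 - 2*e + e*e) * hf, ?_⟩
    apply le_antisymm
    · rw [sup_le_iff]
      constructor <;> rw [Ideal.span_singleton_le_span_singleton]
      · exact ⟨e, by linear_combination (f - 1) * he⟩
      · exact ⟨f, by linear_combination (e - 1) * hf⟩
    · rw [Ideal.span_le, Set.singleton_subset_iff]
      have he' : e ∈ Ideal.span {e} ⊔ Ideal.span {f} :=
        le_sup_left (α := Ideal R) (Ideal.mem_span_singleton_self e)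
      have hf' : f ∈ Ideal.span {e} ⊔ Ideal.span {f} :=
        le_sup_right (α := Ideal R) (Ideal.mem_span_singleton_self f)
      exact sub_mem (add_mem he' hf') (Ideal.mul_mem_left _ e hf')

private lemma flat_of_vnr {R : Type*} [CommRing R] (hv : ∀ a : R, ∃ x, a * x * a = a)
    (M : Type*) [AddCommGroup M] [Module R M] : Module.Flat R M := by
  rw [Module.Flat.iff_rTensor_injective]
  intro I hI
  obtain ⟨e, he, rfl⟩ := fg_ideal_idem hv I hI
  have heI : e ∈ Ideal.span {e} := Ideal.mem_span_singleton_self e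
  set σ : R →ₗ[R] (Ideal.span {e} : Ideal R) :=
    LinearMap.toSpanSingleton R (Ideal.span ({e} : Set R)) ⟨e, heI⟩ with hσ
  have hcomp : σ ∘ₗ (Ideal.span {e} : Ideal R).subtype = LinearMap.id := by
    ext x
    have hmem := x.2
    rw [Ideal.mem_span_singleton] at hmem
    obtain ⟨c, hc⟩ := hmem
    simp only [LinearMap.comp_apply, Submodule.subtype_apply, LinearMap.id_apply, hσ,
      LinearMap.toSpanSingleton_apply]
    show (x : R) • e = (x : R)
    rw [smul_eq_mul, hc]
    linear_combination c * he
  have hr : (LinearMap.rTensor M σ) ∘ₗ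
      (LinearMap.rTensor M (Ideal.span {e} : Ideal R).subtype) = LinearMap.id := by
    rw [← LinearMap.rTensor_comp, hcomp, LinearMap.rTensor_id]
  exact Function.LeftInverse.injective (g := LinearMap.rTensor M σ)
    (fun z => by rw [← LinearMap.comp_apply, hr, LinearMap.id_apply])

end Flat

/-- Let `S` be a commutative monoid in which every element is idempotent and `K` a
field.  Then every module over the monoid algebra `K[S]` is flat. -/
theorem monoidAlgebra_module_flat {K S : Type*} [Field K] [CommMonoid S]
    (hS : ∀ s : S, s * s = s)
    (M : Type*) [AddCommGroup M] [Module (MonoidAlgebra K S) M] :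
    Module.Flat (MonoidAlgebra K S) M :=
  flat_of_vnr (vnr hS) M
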